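/- Let G be a topological group acting continuously on a topological space X. Suppose W ⊆ X is open, x ∈ W, O is a symmetric open neighborhood of the identity of G, and V is an open neighborhood of x such that closure((O*O)·V) ⊆ W. Then the star of x in the cover {closure(O·y) : y ∈ X} is contained in W; that is, for any y ∈ X, if x ∈ closure(O·y) then closure(O·y) ⊆ W. -/

import Mathlib

open Pointwise

theorem stmt11 {G X : Type*} [Group G] [TopologicalSpace G] [IsTopologicalGroup G]
    [TopologicalSpace X] [MulAction G X] [ContinuousSMul G X]
    (W : Set X) (hW : IsOpen W) (x : X) (hxW : x ∈ W)
    (O : Set G) (hO : IsOpen O) (hOe : (1 : G) ∈ O) (hOsym : O⁻¹ = O)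
    (V : Set X) (hV : IsOpen V) (hxV : x ∈ V)
    (hOOV : closure ((O * O) • V) ⊆ W) :
    ∀ y : X, x ∈ closure ((fun g => g • y) '' O) →
      closure ((fun g => g • y) '' O) ⊆ W := by
  intro y hx
  have hne : (V ∩ (fun g => g • y) '' O).Nonempty := by
    rcases (mem_closure_iff.mp hx V hV hxV) with ⟨z, hz⟩
    exact ⟨z, hz⟩
  rcases hne with ⟨z, hzV, g, hgO, hgz⟩
  have hsub : (fun g => g • y) '' O ⊆ (O * O) • V := by
    rintro _ ⟨h, hhO, rfl⟩
    refine ⟨h * g⁻¹, ⟨h, hhO, g⁻¹, by rw [← hOsym]; exact Set.inv_mem_inv.mpr hgO, rfl⟩, z, hzV, ?_⟩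
    rw [← hgz]
    simp [mul_smul]
  exact fun w hw => hOOV (closure_mono hsub hw)
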